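/- The linear map φ_{n-3} : R_{n-3} → R_{n-1}/⟨e_1^{(n-1)}⟩ defined on basis vectors by φ_{n-3}(e_l^{(n-3)}) = (1/l)·\bar{e}_{l+1}^{(n-1)} for l = 1, ..., n-2 is injective and B_2-equivariant, i.e., g.φ_{n-3}(x) = φ_{n-3}(g.x) for every upper triangular g ∈ SL(2,C) and x ∈ R_{n-3}. -/

import Mathlib

open MvPolynomial

namespace PhiAux

noncomputable def M (i j : ℕ) : MvPolynomial (Fin 2) ℂ := X 0 ^ i * X 1 ^ j

lemma M_eq (i j : ℕ) :
    M i j = monomial (Finsupp.single 0 i + Finsupp.single 1 j) (1 : ℂ) := by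
  rw [M, X_pow_eq_monomial, X_pow_eq_monomial, monomial_mul, mul_one]

lemma coeff_M (i j i' j' : ℕ) :
    coeff (Finsupp.single 0 i + Finsupp.single 1 j) (M i' j') =
      if i' = i ∧ j' = j then 1 else 0 := by
  rw [M_eq, coeff_monomial]
  by_cases h : i' = i ∧ j' = j
  · obtain ⟨rfl, rfl⟩ := h; simp
  · rw [if_neg h, if_neg]
    intro he
    refine h ⟨?_, ?_⟩
    · have := DFunLike.congr_fun he (0 : Fin 2)
      simpa [Finsupp.single_apply] using this
    · have := DFunLike.congr_fun he (1 : Fin 2)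
      simpa [Finsupp.single_apply] using this

lemma aeval_M (lam b : ℂ) (a e : ℕ) (h : a ≤ e) :
    aeval ![C lam⁻¹ * X 0 - C (lam⁻¹ * b) * X 1, C lam * X 1] (M a (e - a)) =
    ∑ j ∈ Finset.range (a + 1),
      (lam⁻¹ ^ a * lam ^ (e - a) * ((-b) ^ (a - j) * (a.choose j : ℂ))) • M j (e - j) := by
  rw [M, map_mul, map_pow, map_pow, aeval_X, aeval_X]
  simp only [Matrix.cons_val_zero, Matrix.cons_val_one, Matrix.head_cons]
  have hx0 : (C lam⁻¹ * X 0 - C (lam⁻¹ * b) * X 1 : MvPolynomial (Fin 2) ℂ)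
      = C lam⁻¹ * (X 0 + (- C b) * X 1) := by rw [C_mul]; ring
  rw [hx0, mul_pow, mul_pow, add_pow, Finset.mul_sum, Finset.sum_mul]
  refine Finset.sum_congr rfl fun j hj => ?_
  have hj' : j ≤ a := by simpa [Nat.lt_succ_iff] using hj
  rw [smul_eq_C_mul, M, show e - j = (a - j) + (e - a) by omega, pow_add]
  simp only [C_mul, C_pow, map_neg, map_natCast]
  ring

lemma scalar_id (lam b : ℂ) (hlam : lam ≠ 0) (d a j : ℕ) (hj : j ≤ a) (ha : a ≤ d) :
    (1 / ((a : ℂ) + 1)) * (lam⁻¹ ^ (a + 1) * lam ^ (d + 2 - (a + 1)) *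
      ((-b) ^ ((a + 1) - (j + 1)) * (((a + 1).choose (j + 1) : ℕ) : ℂ))) =
    lam⁻¹ ^ a * lam ^ (d - a) * ((-b) ^ (a - j) * ((a.choose j : ℕ) : ℂ)) *
      (1 / ((j : ℂ) + 1)) := by
  rw [show d + 2 - (a + 1) = (d - a) + 1 by omega, show (a + 1) - (j + 1) = a - j by omega,
      pow_succ, pow_succ]
  have hA : ((a : ℂ) + 1) ≠ 0 := Nat.cast_add_one_ne_zero a
  have hJ : ((j : ℂ) + 1) ≠ 0 := Nat.cast_add_one_ne_zero j
  have hch : (((a + 1).choose (j + 1) : ℕ) : ℂ) * ((j : ℂ) + 1)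
      = ((a : ℂ) + 1) * ((a.choose j : ℕ) : ℂ) := by
    exact_mod_cast (Nat.add_one_mul_choose_eq a j).symm
  have h1 : lam⁻¹ * lam = 1 := inv_mul_cancel₀ hlam
  generalize hL : lam⁻¹ = L at *
  field_simp
  linear_combination (L ^ a * (-b) ^ (a - j) *
      (((a + 1).choose (j + 1) : ℕ) : ℂ) * ((j : ℂ) + 1)) * h1 +
    (L ^ a * (-b) ^ (a - j)) * hch

section Main

variable {n : ℕ} (hn : 3 ≤ n) (φ : MvPolynomial (Fin 2) ℂ →ₗ[ℂ] MvPolynomial (Fin 2) ℂ)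
  (hφ : ∀ l ∈ Finset.Icc 1 (n - 2),
      φ ((X 0 : MvPolynomial (Fin 2) ℂ) ^ (l - 1) * X 1 ^ (n - 2 - l)) =
        (1 / (l : ℂ)) • ((X 0 : MvPolynomial (Fin 2) ℂ) ^ l * X 1 ^ (n - 1 - l)))

include hn hφ in
lemma phiM (a : ℕ) (ha : a ≤ n - 3) :
    φ (M a (n - 3 - a)) = (1 / ((a : ℂ) + 1)) • M (a + 1) (n - 2 - a) := by
  have h := hφ (a + 1) (Finset.mem_Icc.2 ⟨by omega, by omega⟩)
  rw [show a + 1 - 1 = a from rfl, show n - 2 - (a + 1) = n - 3 - a by omega,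
      show n - 1 - (a + 1) = n - 2 - a by omega] at h
  rw [M, M, h]
  push_cast
  rfl

include hn hφ in
lemma key (lam b : ℂ) (hlam : lam ≠ 0) (a : ℕ) (ha : a ≤ n - 3) :
    aeval ![C lam⁻¹ * X 0 - C (lam⁻¹ * b) * X 1, C lam * X 1] (φ (M a (n - 3 - a))) -
      φ (aeval ![C lam⁻¹ * X 0 - C (lam⁻¹ * b) * X 1, C lam * X 1] (M a (n - 3 - a)))
    ∈ Submodule.span ℂ {(X 1 : MvPolynomial (Fin 2) ℂ) ^ (n - 1)} := by
  set d := n - 3 with hd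
  -- left term
  rw [phiM hn φ hφ a ha, map_smul,
      show n - 2 - a = (d + 2) - (a + 1) by omega,
      aeval_M lam b (a + 1) (d + 2) (by omega)]
  -- right term
  rw [aeval_M lam b a d ha, map_sum]
  simp only [map_smul]
  have hφj : ∀ j ∈ Finset.range (a + 1),
      (lam⁻¹ ^ a * lam ^ (d - a) * ((-b) ^ (a - j) * (a.choose j : ℂ))) • φ (M j (d - j)) =
      ((lam⁻¹ ^ a * lam ^ (d - a) * ((-b) ^ (a - j) * (a.choose j : ℂ))) * (1 / ((j : ℂ) + 1)))
        • M (j + 1) ((d + 2) - (j + 1)) := by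
    intro j hj
    have hj' : j ≤ a := by simpa [Nat.lt_succ_iff] using hj
    rw [phiM hn φ hφ j (by omega), smul_smul, show n - 2 - j = (d + 2) - (j + 1) by omega]
  rw [Finset.sum_congr rfl hφj, Finset.sum_range_succ', smul_add]
  have hmain : (1 / ((a : ℂ) + 1)) • ∑ j ∈ Finset.range (a + 1),
      (lam⁻¹ ^ (a + 1) * lam ^ (d + 2 - (a + 1)) *
        ((-b) ^ (a + 1 - (j + 1)) * ((a + 1).choose (j + 1) : ℂ))) • M (j + 1) (d + 2 - (j + 1)) =
      ∑ j ∈ Finset.range (a + 1),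
      ((lam⁻¹ ^ a * lam ^ (d - a) * ((-b) ^ (a - j) * (a.choose j : ℂ))) * (1 / ((j : ℂ) + 1)))
        • M (j + 1) ((d + 2) - (j + 1)) := by
    rw [Finset.smul_sum]
    refine Finset.sum_congr rfl fun j hj => ?_
    have hj' : j ≤ a := by simpa [Nat.lt_succ_iff] using hj
    rw [smul_smul, scalar_id lam b hlam d a j hj' ha]
  rw [hmain, add_sub_cancel_left]
  have hM0 : M 0 ((d + 2) - 0) = (X 1 : MvPolynomial (Fin 2) ℂ) ^ (n - 1) := by
    rw [M, pow_zero, one_mul, show d + 2 - 0 = n - 1 by omega]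
  rw [hM0]
  exact Submodule.smul_mem _ _ (Submodule.smul_mem _ _ (Submodule.mem_span_singleton_self _))

omit hn in
lemma span_eq :
    {q : MvPolynomial (Fin 2) ℂ |
      ∃ l ∈ Finset.Icc 1 (n - 2),
        q = (X 0 : MvPolynomial (Fin 2) ℂ) ^ (l - 1) * X 1 ^ (n - 2 - l)}
    = Set.range (fun a : Fin (n - 2) => M a (n - 3 - a)) := by
  ext q
  simp only [Set.mem_setOf_eq, Set.mem_range, Finset.mem_Icc, M]
  constructor
  · rintro ⟨l, ⟨h1, h2⟩, rfl⟩
    refine ⟨⟨l - 1, by omega⟩, ?_⟩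
    simp only
    rw [show n - 3 - (l - 1) = n - 2 - l by omega]
  · rintro ⟨a, rfl⟩
    have ha : (a : ℕ) < n - 2 := a.isLt
    exact ⟨a + 1, ⟨by omega, by omega⟩, by
      rw [show (a : ℕ) + 1 - 1 = (a : ℕ) from rfl, show n - 2 - ((a : ℕ) + 1) = n - 3 - a by omega]⟩

end Main

end PhiAux

open PhiAux in
theorem phi_injective_and_equivariant (n : ℕ) (hn : 3 ≤ n)
    (φ : MvPolynomial (Fin 2) ℂ →ₗ[ℂ] MvPolynomial (Fin 2) ℂ)
    (hφ : ∀ l ∈ Finset.Icc 1 (n - 2),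
      φ ((X 0 : MvPolynomial (Fin 2) ℂ) ^ (l - 1) * X 1 ^ (n - 2 - l)) =
        (1 / (l : ℂ)) • ((X 0 : MvPolynomial (Fin 2) ℂ) ^ l * X 1 ^ (n - 1 - l))) :
    (∀ x ∈ Submodule.span ℂ
        {q : MvPolynomial (Fin 2) ℂ |
          ∃ l ∈ Finset.Icc 1 (n - 2),
            q = (X 0 : MvPolynomial (Fin 2) ℂ) ^ (l - 1) * X 1 ^ (n - 2 - l)},
      φ x ∈ Submodule.span ℂ {(X 1 : MvPolynomial (Fin 2) ℂ) ^ (n - 1)} → x = 0) ∧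
    (∀ lam b : ℂ, lam ≠ 0 →
      ∀ x ∈ Submodule.span ℂ
        {q : MvPolynomial (Fin 2) ℂ |
          ∃ l ∈ Finset.Icc 1 (n - 2),
            q = (X 0 : MvPolynomial (Fin 2) ℂ) ^ (l - 1) * X 1 ^ (n - 2 - l)},
      (aeval ![C lam⁻¹ * X 0 - C (lam⁻¹ * b) * X 1, C lam * X 1] (φ x) :
          MvPolynomial (Fin 2) ℂ) -
        φ (aeval ![C lam⁻¹ * X 0 - C (lam⁻¹ * b) * X 1, C lam * X 1] x) ∈
      Submodule.span ℂ {(X 1 : MvPolynomial (Fin 2) ℂ) ^ (n - 1)}) := by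
  constructor
  · intro x hx hφx
    rw [span_eq (n := n)] at hx
    obtain ⟨c, hc⟩ := (Submodule.mem_span_range_iff_exists_fun ℂ).1 hx
    obtain ⟨t, ht⟩ := Submodule.mem_span_singleton.1 hφx
    have hφx' : φ x = ∑ i : Fin (n - 2),
        (c i * (1 / ((i : ℕ) + 1 : ℂ))) • M ((i : ℕ) + 1) (n - 2 - (i : ℕ)) := by
      rw [← hc, map_sum]
      refine Finset.sum_congr rfl fun i _ => ?_
      rw [map_smul, phiM hn φ hφ i (by omega), smul_smul]
    have hc0 : ∀ i : Fin (n - 2), c i = 0 := by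
      intro i
      have h1 := congrArg
        (coeff (Finsupp.single 0 ((i : ℕ) + 1) + Finsupp.single 1 (n - 2 - (i : ℕ)))) ht
      rw [hφx'] at h1
      rw [coeff_sum] at h1
      simp only [coeff_smul] at h1
      have h2 : ∀ j : Fin (n - 2), j ≠ i →
          (c j * (1 / ((j : ℕ) + 1 : ℂ))) •
            coeff (Finsupp.single 0 ((i : ℕ) + 1) + Finsupp.single 1 (n - 2 - (i : ℕ)))
              (M ((j : ℕ) + 1) (n - 2 - (j : ℕ))) = 0 := by
        intro j hji
        rw [coeff_M, if_neg, smul_zero]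
        rintro ⟨h3, -⟩
        exact hji (Fin.ext (by omega))
      rw [Finset.sum_eq_single i (fun j _ hji => h2 j hji) (fun h => absurd (Finset.mem_univ i) h)]
        at h1
      rw [coeff_M, if_pos ⟨rfl, rfl⟩] at h1
      have h4 : coeff (Finsupp.single 0 ((i : ℕ) + 1) + Finsupp.single 1 (n - 2 - (i : ℕ)))
          ((X 1 : MvPolynomial (Fin 2) ℂ) ^ (n - 1)) = 0 := by
        have : (X 1 : MvPolynomial (Fin 2) ℂ) ^ (n - 1) = M 0 (n - 1) := by
          rw [M, pow_zero, one_mul]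
        rw [this, coeff_M, if_neg]
        rintro ⟨h5, -⟩
        omega
      rw [h4, smul_zero, smul_eq_mul, mul_one] at h1
      have h6 : ((i : ℕ) + 1 : ℂ) ≠ 0 := Nat.cast_add_one_ne_zero _
      field_simp at h1
      simpa using h1.symm
    rw [← hc]
    simp [hc0]
  · intro lam b hlam x hx
    rw [span_eq (n := n)] at hx
    obtain ⟨c, hc⟩ := (Submodule.mem_span_range_iff_exists_fun ℂ).1 hx
    rw [← hc]
    simp only [map_sum, map_smul]
    rw [← Finset.sum_sub_distrib]
    refine Submodule.sum_mem _ fun i _ => ?_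
    rw [← smul_sub]
    exact Submodule.smul_mem _ _ (key hn φ hφ lam b hlam i (by omega))
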